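/- Let C be a category with a terminal object 1, F : C → C a functor, and suppose the codirected (ω^op) diagram 1 ← F1 ← F²1 ← ⋯ (with connecting maps obtained by applying F to the unique map F1 → 1) has a limit L which is preserved by F. Then the canonical comparison map L → F L is an isomorphism and equips L with the structure of a final F-coalgebra: for every coalgebra c : X → F X there is a unique morphism h : X → L with (L → F L understood as structure) F h ∘ c = (structure of L) ∘ h. -/

import Mathlib

open CategoryTheory

universe v u

variable {C : Type u} [Category.{v} C]

/-- The objects `Fⁿ(1)` of the chain `1 ← F1 ← F²1 ← ⋯`. -/
def chainObj (F : C ⥤ C) (T : C) : ℕ → C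
  | 0 => T
  | n + 1 => F.obj (chainObj F T n)

/-- The connecting maps of the chain `1 ← F1 ← F²1 ← ⋯`, obtained by iterated
application of `F` to the (unique) map `t : F1 ⟶ 1`. -/
def chainMap (F : C ⥤ C) (T : C) (t : F.obj T ⟶ T) :
    ∀ n : ℕ, chainObj F T (n + 1) ⟶ chainObj F T n
  | 0 => t
  | n + 1 => F.map (chainMap F T t n)

/-- If `T` is terminal, the chain `T ← FT ← F²T ← ⋯` has a limit `(L, p)` and
`F` preserves this limit, then the canonical comparison map `L ⟶ F L` is an
isomorphism making `L` a final `F`-coalgebra. -/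
theorem stmt_19 (F : C ⥤ C) (T : C)
    (hT : ∀ X : C, ∃! _ : X ⟶ T, True)
    (t : F.obj T ⟶ T)
    (L : C) (p : ∀ n : ℕ, L ⟶ chainObj F T n)
    (hp : ∀ n : ℕ, p (n + 1) ≫ chainMap F T t n = p n)
    (hlim : ∀ (X : C) (q : ∀ n : ℕ, X ⟶ chainObj F T n),
      (∀ n : ℕ, q (n + 1) ≫ chainMap F T t n = q n) →
      ∃! m : X ⟶ L, ∀ n : ℕ, m ≫ p n = q n)
    (hpres : ∀ (X : C) (q : ∀ n : ℕ, X ⟶ F.obj (chainObj F T n)),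
      (∀ n : ℕ, q (n + 1) ≫ F.map (chainMap F T t n) = q n) →
      ∃! m : X ⟶ F.obj L, ∀ n : ℕ, m ≫ F.map (p n) = q n) :
    ∃ l : L ⟶ F.obj L,
      (∀ n : ℕ, l ≫ F.map (p n) = p (n + 1)) ∧
      IsIso l ∧
      ∀ (X : C) (c : X ⟶ F.obj X), ∃! h : X ⟶ L, c ≫ F.map h = h ≫ l := by
  have hTeq : ∀ (X : C) (f g : X ⟶ T), f = g := by
    intro X f g
    obtain ⟨u, -, hu⟩ := hT X
    rw [hu f trivial, hu g trivial]
  -- the comparison map l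
  obtain ⟨l, hl, -⟩ := hpres L (fun n => p (n + 1)) (fun n => hp (n + 1))
  -- its inverse k
  obtain ⟨k, hk, -⟩ := hlim (F.obj L)
    (fun n => Nat.rec (motive := fun n => F.obj L ⟶ chainObj F T n)
      (F.map (p 0) ≫ t) (fun n _ => F.map (p n)) n)
    (by
      intro n
      cases n with
      | zero => exact hTeq _ _ _
      | succ n => exact (F.map_comp _ _).symm.trans (congrArg F.map (hp n)))
  refine ⟨l, hl, ?_, ?_⟩
  · -- IsIso
    refine ⟨k, ?_, ?_⟩
    · obtain ⟨m, -, hm⟩ := hlim L p hp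
      have h1 : l ≫ k = m := hm _ (by
        intro n
        cases n with
        | zero => exact hTeq _ _ _
        | succ n =>
          rw [Category.assoc, hk (n + 1)]
          exact hl n)
      have h2 : 𝟙 L = m := hm _ (by intro n; simp)
      rw [h1, h2]
    · obtain ⟨m, -, hm⟩ := hpres (F.obj L) (fun n => F.map (p n))
        (fun n => (F.map_comp _ _).symm.trans (congrArg F.map (hp n)))
      have h1 : k ≫ l = m := hm _ (by
        intro n
        rw [Category.assoc, hl n]
        exact hk (n + 1))
      have h2 : 𝟙 (F.obj L) = m := hm _ (by intro n; simp)
      rw [h1, h2]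
  · -- finality
    intro X c
    let q : ∀ n : ℕ, X ⟶ chainObj F T n :=
      fun n => Nat.rec (motive := fun n => X ⟶ chainObj F T n)
        (hT X).exists.choose (fun n qn => c ≫ F.map qn) n
    have hqz : ∀ n, q (n + 1) = c ≫ F.map (q n) := fun n => rfl
    have hqc : ∀ n : ℕ, q (n + 1) ≫ chainMap F T t n = q n := by
      intro n
      induction n with
      | zero => exact hTeq _ _ _
      | succ n ih =>
        show (c ≫ F.map (q (n + 1))) ≫ F.map (chainMap F T t n) = c ≫ F.map (q n)
        rw [Category.assoc, ← F.map_comp, ih]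
    obtain ⟨h, hh, hh'⟩ := hlim X q hqc
    refine ⟨h, ?_, ?_⟩
    · -- c ≫ F.map h = h ≫ l  via uniqueness in hpres with cone n ↦ q (n+1)
      obtain ⟨m, -, hm⟩ := hpres X (fun n => q (n + 1)) (fun n => hqc (n + 1))
      have h1 : c ≫ F.map h = m := hm _ (by
        intro n
        rw [Category.assoc, ← F.map_comp, hh n]
        exact (hqz n).symm)
      have h2 : h ≫ l = m := hm _ (by
        intro n
        rw [Category.assoc, hl n]
        exact hh (n + 1))
      rw [h1, h2]
    · intro h' hh2
      refine hh' h' ?_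
      intro n
      induction n with
      | zero => exact hTeq _ _ _
      | succ n ih =>
        rw [hqz n, ← ih, F.map_comp, ← Category.assoc]
        exact ((congrArg (fun f => f ≫ F.map (p n)) hh2).trans ((Category.assoc _ _ _).trans (congrArg (fun f => h' ≫ f) (hl n)))).symm
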